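/- There exists r' ∈ [0,1] such that the group-wise mass-threshold classifier f_{r'} minimizes the 0-1 loss among all randomized classifiers satisfying Predictive Equality (equal false positive rates across the two groups). -/
import Mathlib


open Finset

/-- `P` is a probability distribution on `X × Z × Y` with `Z = Bool` (group, `true` = A,
`false` = D) and `Y = Bool` (label, `true` = 1). -/
def IsDist {X : Type*} [Fintype X] (P : X × Bool × Bool → ℝ) : Prop :=
  (∀ p, 0 ≤ P p) ∧ ∑ p : X × Bool × Bool, P p = 1

/-- mass of the feature-group cell `(x, z)`. -/
noncomputable def cellMass {X : Type*} (P : X × Bool × Bool → ℝ) (x : X) (z : Bool) : ℝ :=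
  P (x, z, false) + P (x, z, true)

/-- total mass of group `z`. -/
noncomputable def gMass {X : Type*} [Fintype X] (P : X × Bool × Bool → ℝ) (z : Bool) : ℝ :=
  ∑ x, cellMass P x z

/-- score of the cell `(x, z)`: `Pr[Y = 1 | X = x, Z = z]`. -/
noncomputable def score {X : Type*} (P : X × Bool × Bool → ℝ) (x : X) (z : Bool) : ℝ :=
  P (x, z, true) / cellMass P x z

/-- A randomized classifier takes values in `[0,1]`. -/
def InUnit {X : Type*} (f : X × Bool → ℝ) : Prop := ∀ p, f p ∈ Set.Icc (0 : ℝ) 1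

/-- selection rate of randomized classifier `f` on group `z`: `E[f(X,Z) | Z = z]`. -/
noncomputable def selRate {X : Type*} [Fintype X] (P : X × Bool × Bool → ℝ) (f : X × Bool → ℝ)
    (z : Bool) : ℝ :=
  (∑ x, f (x, z) * cellMass P x z) / gMass P z

/-- 0-1 loss of randomized classifier `f` under `P`. -/
noncomputable def loss {X : Type*} [Fintype X] (P : X × Bool × Bool → ℝ) (f : X × Bool → ℝ) : ℝ :=
  ∑ x, ∑ z, (P (x, z, true) * (1 - f (x, z)) + P (x, z, false) * f (x, z))

/-- Demographic parity: equal selection rates on the two groups. -/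
def DP {X : Type*} [Fintype X] (P : X × Bool × Bool → ℝ) (f : X × Bool → ℝ) : Prop :=
  selRate P f true = selRate P f false

/-- false positive rate of `f` on group `z`: `E[f(X,Z) | Y = 0, Z = z]`. -/
noncomputable def fpr {X : Type*} [Fintype X] (P : X × Bool × Bool → ℝ) (f : X × Bool → ℝ)
    (z : Bool) : ℝ :=
  (∑ x, f (x, z) * P (x, z, false)) / (∑ x, P (x, z, false))

/-- `f` is a (group-wise) mass-threshold classifier: within each group it accepts a
prefix of the cells sorted in decreasing order of score (fractionally at the boundary). -/
def IsPrefix {X : Type*} (P : X × Bool × Bool → ℝ) (f : X × Bool → ℝ) : Prop :=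
  ∀ z x x', 0 < cellMass P x z → 0 < cellMass P x' z →
    score P x' z < score P x z → 0 < f (x', z) → f (x, z) = 1

/-- cells of equal score within a group have been merged, i.e. scores of distinct
positive-mass cells within a group are distinct ("strictly decreasing" when sorted). -/
def MergedScores {X : Type*} (P : X × Bool × Bool → ℝ) : Prop :=
  ∀ z x x', 0 < cellMass P x z → 0 < cellMass P x' z → score P x z = score P x' z → x = x'

open Classical in
/-- perturbation of `f`: add `a` at cell `p` and subtract `b` at cell `q`. -/
noncomputable def pert {X : Type*} (f : X × Bool → ℝ) (p q : X × Bool) (a b : ℝ) :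
    X × Bool → ℝ :=
  fun r => f r + (if r = p then a else 0) - (if r = q then b else 0)

open Classical in
lemma ite_psum {ι : Type*} [Fintype ι] (w : ι → ℝ) (p : ι) (a : ℝ) :
    ∑ r, (if r = p then a else 0) * w r = a * w p := by
  simp [ite_mul]

open Classical in
lemma ite_gsum {X : Type*} [Fintype X] (w : X → ℝ) (p : X × Bool) (a : ℝ) (z : Bool) :
    ∑ x, (if ((x, z) : X × Bool) = p then a else 0) * w x
      = if p.2 = z then a * w p.1 else 0 := by
  obtain ⟨p1, p2⟩ := p
  by_cases h : p2 = z
  · subst h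
    simp [Prod.ext_iff, ite_mul]
  · have hx : ∀ x : X, ((x, z) : X × Bool) ≠ (p1, p2) := by
      intro x hx
      exact h ((Prod.mk.injEq _ _ _ _).mp hx).2.symm
    simp [hx, h]

lemma loss_eq {X : Type*} [Fintype X] (P : X × Bool × Bool → ℝ) (g : X × Bool → ℝ) :
    loss P g = (∑ r : X × Bool, P (r.1, r.2, true)) +
      ∑ r : X × Bool, g r * (P (r.1, r.2, false) - P (r.1, r.2, true)) := by
  simp only [loss]
  rw [← Finset.sum_add_distrib, Fintype.sum_prod_type]
  exact Finset.sum_congr rfl fun x _ => Finset.sum_congr rfl fun z _ => by ring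

lemma pert_sum {X : Type*} [Fintype X] (f : X × Bool → ℝ) (p q : X × Bool) (a b : ℝ)
    (w : X × Bool → ℝ) :
    ∑ r : X × Bool, pert f p q a b r * w r = (∑ r : X × Bool, f r * w r) + a * w p - b * w q := by
  simp only [pert, sub_mul, add_mul, Finset.sum_sub_distrib, Finset.sum_add_distrib]
  simp [ite_mul]

lemma pert_gsum {X : Type*} [Fintype X] (f : X × Bool → ℝ) (p q : X × Bool) (a b : ℝ)
    (w : X → ℝ) (z : Bool) :
    ∑ x, pert f p q a b (x, z) * w x = (∑ x, f (x, z) * w x)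
      + ((if p.2 = z then a * w p.1 else 0) - (if q.2 = z then b * w q.1 else 0)) := by
  simp only [pert, sub_mul, add_mul, Finset.sum_sub_distrib, Finset.sum_add_distrib, ite_gsum]
  ring

lemma loss_pert {X : Type*} [Fintype X] (P : X × Bool × Bool → ℝ) (f : X × Bool → ℝ)
    (p q : X × Bool) (a b : ℝ) :
    loss P (pert f p q a b) = loss P f +
      (a * (P (p.1, p.2, false) - P (p.1, p.2, true))
        - b * (P (q.1, q.2, false) - P (q.1, q.2, true))) := by
  rw [loss_eq, loss_eq, pert_sum]
  ring

/-- There is `r' ∈ [0,1]` such that the group-wise mass-threshold classifier of false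
positive rate `r'` on both groups minimizes the 0-1 loss among all randomized classifiers
satisfying predictive equality. -/
theorem stmt15 {X : Type*} [Fintype X] (P : X × Bool × Bool → ℝ) (hP : IsDist P)
    (h0 : ∀ z, 0 < ∑ x, P (x, z, false)) :
    ∃ r' ∈ Set.Icc (0 : ℝ) 1, ∃ f : X × Bool → ℝ,
      InUnit f ∧ IsPrefix P f ∧
      (∀ x z, 0 < cellMass P x z → score P x z = 1 → f (x, z) = 1) ∧
      (∀ z, fpr P f z = r') ∧
      ∀ g : X × Bool → ℝ, InUnit g → fpr P g true = fpr P g false →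
        loss P f ≤ loss P g := by
  classical
  have hPpos : ∀ p, 0 ≤ P p := hP.1
  set S : Set (X × Bool → ℝ) := {f | InUnit f ∧ fpr P f true = fpr P f false} with hSdef
  have hcont_fpr : ∀ z, Continuous fun f : X × Bool → ℝ => fpr P f z := by
    intro z
    simp only [fpr]
    exact (continuous_finset_sum _ fun x _ =>
      (continuous_apply ((x, z) : X × Bool)).mul continuous_const).div_const _
  have hcont_loss : Continuous (loss P) := by
    unfold loss
    exact continuous_finset_sum _ fun x _ => continuous_finset_sum _ fun z _ =>
      ((continuous_const.mul (continuous_const.sub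
        (continuous_apply ((x, z) : X × Bool)))).add
        (continuous_const.mul (continuous_apply ((x, z) : X × Bool))))
  have hScompact : IsCompact S := by
    have h1 : IsCompact (Set.pi Set.univ fun _ : X × Bool => Set.Icc (0 : ℝ) 1) :=
      isCompact_univ_pi fun _ => isCompact_Icc
    have h2 : S = (Set.pi Set.univ fun _ : X × Bool => Set.Icc (0 : ℝ) 1) ∩
        {f | fpr P f true = fpr P f false} := by
      ext f
      constructor
      · rintro ⟨hU, hPE⟩
        exact ⟨fun p _ => hU p, hPE⟩
      · rintro ⟨hU, hPE⟩
        exact ⟨fun p => hU p (Set.mem_univ p), hPE⟩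
    rw [h2]
    exact h1.inter_right (isClosed_eq (hcont_fpr true) (hcont_fpr false))
  have hSne : S.Nonempty := by
    refine ⟨fun _ => 0, ⟨fun p => by simp, ?_⟩⟩
    simp [fpr]
  obtain ⟨f, hfS, hfmin⟩ := hScompact.exists_isMinOn hSne hcont_loss.continuousOn
  rw [isMinOn_iff] at hfmin
  obtain ⟨hfU, hfPE⟩ := hfS
  have hmin : ∀ g, InUnit g → fpr P g true = fpr P g false → loss P f ≤ loss P g :=
    fun g h1 h2 => hfmin g ⟨h1, h2⟩
  -- Step 1 : cells of score 1 are fully accepted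
  have hone : ∀ x z, 0 < cellMass P x z → score P x z = 1 → f (x, z) = 1 := by
    intro x z hcm hs
    by_contra hne
    have hflt : f (x, z) < 1 := lt_of_le_of_ne (hfU (x, z)).2 hne
    have hP1 : P (x, z, true) = cellMass P x z := by
      rw [score, div_eq_one_iff_eq (ne_of_gt hcm)] at hs
      exact hs
    have hP0 : P (x, z, false) = 0 := by
      rw [cellMass] at hP1
      linarith
    have hP1pos : 0 < P (x, z, true) := by
      rw [cellMass, hP0] at hcm
      linarith
    set a := 1 - f (x, z) with ha
    have hapos : 0 < a := by linarith
    set g := pert f (x, z) (x, z) a 0 with hg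
    have hgU : InUnit g := by
      intro r
      by_cases hr : r = (x, z)
      · subst hr
        simp only [hg, pert, if_pos rfl]
        constructor <;> simp <;> linarith [(hfU (x, z)).1]
      · simp only [hg, pert, if_neg hr]
        simpa using hfU r
    have hgfpr : ∀ z', fpr P g z' = fpr P f z' := by
      intro z'
      rw [hg]
      simp only [fpr]
      rw [pert_gsum]
      have hz : (if ((x, z) : X × Bool).2 = z' then a * P (((x, z) : X × Bool).1, z', false)
            else 0) -
          (if ((x, z) : X × Bool).2 = z' then (0 : ℝ) * P (((x, z) : X × Bool).1, z', false)
            else 0) = 0 := by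
        by_cases hzz : z = z'
        · subst hzz
          simp [hP0]
        · simp [hzz]
      rw [hz, add_zero]
    have hgloss : loss P g < loss P f := by
      rw [hg, loss_pert]
      have : a * (P (x, z, false) - P (x, z, true)) = -(a * P (x, z, true)) := by
        rw [hP0]; ring
      nlinarith [mul_pos hapos hP1pos]
    have := hmin g hgU (by rw [hgfpr, hgfpr]; exact hfPE)
    linarith
  -- Step 2 : the minimizer is a prefix classifier
  have hscore_le : ∀ y z, 0 < cellMass P y z → score P y z ≤ 1 := by
    intro y z hy
    rw [score, div_le_one hy, cellMass]
    linarith [hPpos (y, z, false)]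
  have hpre : IsPrefix P f := by
    intro z x x' hcx hcx' hss hfx'
    by_contra hne
    have hfx : f (x, z) < 1 := lt_of_le_of_ne (hfU (x, z)).2 hne
    have hP0x : 0 < P (x, z, false) := by
      rcases (hPpos (x, z, false)).lt_or_eq with h | h
      · exact h
      · exfalso
        have hs1 : score P x z = 1 := by
          have h1 : P (x, z, true) = cellMass P x z := by
            rw [cellMass, ← h]; ring
          rw [score, h1, div_self (ne_of_gt hcx)]
        exact hne (hone x z hcx hs1)
    have hP0x' : 0 < P (x', z, false) := by
      rcases (hPpos (x', z, false)).lt_or_eq with h | h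
      · exact h
      · exfalso
        have hs1 : score P x' z = 1 := by
          have h1 : P (x', z, true) = cellMass P x' z := by
            rw [cellMass, ← h]; ring
          rw [score, h1, div_self (ne_of_gt hcx')]
        have := hscore_le x z hcx
        rw [hs1] at hss
        linarith
    have hratio : P (x', z, true) / P (x', z, false) < P (x, z, true) / P (x, z, false) := by
      rw [div_lt_div_iff₀ hP0x' hP0x]
      have h1 := hss
      rw [score, score, div_lt_div_iff₀ hcx' hcx, cellMass, cellMass] at h1
      nlinarith
    set δ := min (P (x', z, false) * f (x', z)) (P (x, z, false) * (1 - f (x, z))) with hδ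
    have hδpos : 0 < δ :=
      lt_min (mul_pos hP0x' hfx') (mul_pos hP0x (by linarith))
    set a := δ / P (x, z, false) with haa
    set b := δ / P (x', z, false) with hbb
    have hxx' : x ≠ x' := by
      intro h
      rw [h] at hss
      exact lt_irrefl _ hss
    have hpqne : ((x, z) : X × Bool) ≠ (x', z) := by
      simp [hxx']
    set g := pert f (x, z) (x', z) a b with hg
    have hapos : 0 < a := div_pos hδpos hP0x
    have hbpos : 0 < b := div_pos hδpos hP0x'
    have ha1 : a ≤ 1 - f (x, z) := by
      rw [haa, div_le_iff₀ hP0x]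
      calc δ ≤ P (x, z, false) * (1 - f (x, z)) := min_le_right _ _
        _ = (1 - f (x, z)) * P (x, z, false) := by ring
    have hb1 : b ≤ f (x', z) := by
      rw [hbb, div_le_iff₀ hP0x']
      calc δ ≤ P (x', z, false) * f (x', z) := min_le_left _ _
        _ = f (x', z) * P (x', z, false) := by ring
    have hgU : InUnit g := by
      intro r
      by_cases h1 : r = (x, z)
      · subst h1
        simp only [hg, pert, if_pos rfl, if_neg hpqne]
        constructor <;> simp <;> linarith [(hfU (x, z)).1]
      · by_cases h2 : r = (x', z)
        · subst h2
          simp only [hg, pert, if_neg hpqne.symm, if_pos rfl]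
          constructor <;> simp <;> linarith [(hfU (x', z)).2]
        · simp only [hg, pert, if_neg h1, if_neg h2]
          simpa using hfU r
    have hgfpr : ∀ z', fpr P g z' = fpr P f z' := by
      intro z'
      rw [hg]
      simp only [fpr]
      rw [pert_gsum]
      have hz : (if ((x, z) : X × Bool).2 = z' then a * P (((x, z) : X × Bool).1, z', false)
            else 0) -
          (if ((x', z) : X × Bool).2 = z' then b * P (((x', z) : X × Bool).1, z', false)
            else 0) = 0 := by
        by_cases hzz : z = z'
        · subst hzz
          simp only [if_pos rfl]
          rw [haa, hbb, div_mul_cancel₀ _ (ne_of_gt hP0x), div_mul_cancel₀ _ (ne_of_gt hP0x')]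
          ring
        · simp [hzz]
      rw [hz, add_zero]
    have hgloss : loss P g < loss P f := by
      rw [hg, loss_pert]
      have hcomp : a * (P (x, z, false) - P (x, z, true))
          - b * (P (x', z, false) - P (x', z, true))
          = δ * (P (x', z, true) / P (x', z, false) - P (x, z, true) / P (x, z, false)) := by
        rw [haa, hbb]
        field_simp
        ring
      rw [hcomp]
      nlinarith [mul_pos hδpos (sub_pos.mpr hratio)]
    have := hmin g hgU (by rw [hgfpr, hgfpr]; exact hfPE)
    linarith
  -- Step 3 : assemble
  refine ⟨fpr P f true, ⟨?_, ?_⟩, f, hfU, hpre, hone, ?_, hmin⟩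
  · simp only [fpr]
    apply div_nonneg _ (h0 true).le
    exact Finset.sum_nonneg fun x _ => mul_nonneg (hfU (x, true)).1 (hPpos _)
  · simp only [fpr]
    rw [div_le_one (h0 true)]
    refine Finset.sum_le_sum fun x _ => ?_
    calc f (x, true) * P (x, true, false)
        ≤ 1 * P (x, true, false) :=
          mul_le_mul_of_nonneg_right (hfU (x, true)).2 (hPpos _)
      _ = P (x, true, false) := one_mul _
  · intro z
    cases z
    · exact hfPE.symm
    · rfl
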